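/- Let E be a finite group with a central subgroup Z of order 2 such that the quotient E/Z is an elementary abelian 2-group. If every element of E/Z has a preimage in E of order at most 2, then E itself is an elementary abelian 2-group; in particular, there exists a subgroup H ≤ E with H ∩ Z = {1} that maps isomorphically onto E/Z under the quotient map (i.e., the central extension 1 → Z → E → E/Z → 1 splits). -/

import Mathlib

/-- Let `E` be a finite group with a central subgroup `Z` of order 2 such
that `E ⧸ Z` is an elementary abelian 2-group. If every element of `E ⧸ Z` has a preimage in
`E` of order at most 2, then `E` itself is an elementary abelian 2-group; in particular
there is a subgroup `H ≤ E` with `H ⊓ Z = ⊥` mapping isomorphically onto `E ⧸ Z` (the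
central extension splits). -/
theorem stmt10 (E : Type*) [Group E] [Finite E] (Z : Subgroup E) [Z.Normal]
    (hZc : Z ≤ Subgroup.center E) (hZ2 : Nat.card Z = 2)
    (hquot : ∀ x : E ⧸ Z, x ^ 2 = 1)
    (hlift : ∀ x : E ⧸ Z, ∃ e : E, (e : E ⧸ Z) = x ∧ e ^ 2 = 1) :
    (∀ e : E, e ^ 2 = 1) ∧ (∀ e e' : E, e * e' = e' * e) ∧
      ∃ H : Subgroup E, H ⊓ Z = ⊥ ∧
        Function.Bijective (fun h : H => ((h : E) : E ⧸ Z)) := by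
  -- Every element of E squares to 1
  have hsq : ∀ e : E, e ^ 2 = 1 := by
    intro x
    obtain ⟨e, he, he2⟩ := hlift (x : E ⧸ Z)
    have hz : e⁻¹ * x ∈ Z := by exact QuotientGroup.eq.mp he
    have hz2 : (e⁻¹ * x) ^ 2 = 1 := by
      have : (⟨e⁻¹ * x, hz⟩ : Z) ^ 2 = 1 := by
        rw [← hZ2]; exact pow_card_eq_one'
      simpa using congrArg (Subtype.val) this
    have hc : ∀ y : E, (e⁻¹ * x) * y = y * (e⁻¹ * x) := fun y =>
      (Subgroup.mem_center_iff.mp (hZc hz) y).symm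
    have hx : x = e * (e⁻¹ * x) := by group
    calc x ^ 2 = (e * (e⁻¹ * x)) ^ 2 := by rw [← hx]
      _ = e * ((e⁻¹ * x) * e) * (e⁻¹ * x) := by rw [pow_two]; group
      _ = e * (e * (e⁻¹ * x)) * (e⁻¹ * x) := by rw [hc e]
      _ = (e * e) * ((e⁻¹ * x) * (e⁻¹ * x)) := by group
      _ = e ^ 2 * (e⁻¹ * x) ^ 2 := by rw [pow_two, pow_two]
      _ = 1 := by rw [he2, hz2, one_mul]
  have hinv : ∀ e : E, e⁻¹ = e := by
    intro e
    rw [← mul_eq_one_iff_inv_eq, ← pow_two]; exact hsq e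
  have hcomm : ∀ e e' : E, e * e' = e' * e := by
    intro a b
    calc a * b = (a * b)⁻¹ := (hinv _).symm
      _ = b⁻¹ * a⁻¹ := mul_inv_rev a b
      _ = b * a := by rw [hinv, hinv]
  refine ⟨hsq, hcomm, ?_⟩
  letI : CommGroup E := { ‹Group E› with mul_comm := hcomm }
  letI : Module (ZMod 2) (Additive E) := AddCommGroup.zmodModule (by
    intro x
    show (2 : ℕ) • x = 0
    rw [two_nsmul]
    show Additive.ofMul (x.toMul * x.toMul) = 0
    rw [← pow_two, hsq]; rfl)
  set Zm : Submodule (ZMod 2) (Additive E) :=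
    AddSubgroup.toZModSubmodule 2 (Subgroup.toAddSubgroup Z) with hZm
  obtain ⟨q, hq⟩ := Submodule.exists_isCompl Zm
  set H : Subgroup E := Subgroup.toAddSubgroup.symm q.toAddSubgroup with hH
  have hmemH : ∀ x : E, x ∈ H ↔ Additive.ofMul x ∈ q := by
    intro x; rfl
  have hmemZ : ∀ x : E, x ∈ Z ↔ Additive.ofMul x ∈ Zm := by
    intro x; rfl
  refine ⟨H, ?_, ?_, ?_⟩
  · -- H ⊓ Z = ⊥
    rw [eq_bot_iff]
    intro x hx
    have h1 : Additive.ofMul x ∈ q ⊓ Zm :=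
      ⟨(hmemH x).mp hx.1, (hmemZ x).mp hx.2⟩
    rw [inf_comm, hq.inf_eq_bot] at h1
    simpa using h1
  · -- injective
    intro h h' hhe
    simp only at hhe
    rw [QuotientGroup.eq] at hhe
    have hmem : (h : E)⁻¹ * h' ∈ H := mul_mem (inv_mem h.2) h'.2
    have h1 : Additive.ofMul ((h : E)⁻¹ * h') ∈ q ⊓ Zm :=
      ⟨(hmemH _).mp hmem, (hmemZ _).mp hhe⟩
    rw [inf_comm, hq.inf_eq_bot] at h1
    have : (h : E)⁻¹ * h' = 1 := by exact Additive.ofMul.injective ((Submodule.mem_bot (ZMod 2)).mp h1)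
    ext
    exact (inv_mul_eq_one.mp this)
  · -- surjective
    intro x
    obtain ⟨e, rfl⟩ := QuotientGroup.mk_surjective x
    have he : Additive.ofMul e ∈ Zm ⊔ q := by rw [hq.sup_eq_top]; trivial
    obtain ⟨a, ha, b, hb, hab⟩ := Submodule.mem_sup.mp he
    refine ⟨⟨b.toMul, (hmemH _).mpr (by simpa using hb)⟩, ?_⟩
    have heq : e = a.toMul * b.toMul := by
      have := congrArg Additive.toMul hab
      simpa [mul_comm] using this.symm
    have haZ : a.toMul ∈ Z := (hmemZ _).mpr (by simpa using ha)
    show ((b.toMul : E) : E ⧸ Z) = (e : E ⧸ Z)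
    rw [heq, QuotientGroup.mk_mul, (QuotientGroup.eq_one_iff _).mpr haZ, one_mul]
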